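/- Let n > 1 be an integer, let A be an integer with 2^(n-1) < A < 2^n, and let e ∈ {0, 1}. Then there exists a unique integer B such that for every integer B', |B / 2^(n-1) − √(2^e · A / 2^(n-1))| ≤ |B' / 2^(n-1) − √(2^e · A / 2^(n-1))|. In other words, the square root of a precision-n floating-point number in (1,2) ∪ (2,4) that is not a power of two has a unique nearest point on the grid of integer multiples of 2^(-(n-1)), so round-to-nearest of the square root is well defined without any tie-breaking rule. -/

import Mathlib

/-- For `2^(n-1) < A < 2^n` and `e ∈ {0,1}`, the square root of the
precision-`n` floating-point number `2^e · A / 2^(n-1)` (which lies in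
`(1,2) ∪ (2,4)` and is not a power of two) has a unique nearest point on the grid
of integer multiples of `2^(-(n-1))`, so round-to-nearest of the square root is
well defined without any tie-breaking rule. -/
theorem sqrt_round_nearest_unique (n : ℕ) (hn : 1 < n) (A : ℤ)
    (hA1 : 2 ^ (n - 1) < A) (hA2 : A < 2 ^ n) (e : ℕ) (he : e = 0 ∨ e = 1) :
    ∃! B : ℤ, ∀ B' : ℤ,
      |(B : ℝ) / 2 ^ (n - 1) - Real.sqrt (2 ^ e * (A : ℝ) / 2 ^ (n - 1))|
        ≤ |(B' : ℝ) / 2 ^ (n - 1) - Real.sqrt (2 ^ e * (A : ℝ) / 2 ^ (n - 1))| := by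
  have hpow : (0:ℝ) < 2 ^ (n-1) := by positivity
  set s : ℝ := Real.sqrt (2 ^ e * (A : ℝ) / 2 ^ (n - 1)) with hs
  set t : ℝ := s * 2 ^ (n - 1) with ht
  have hApos : (0:ℤ) < A := lt_trans (by positivity) hA1
  have harg : (0:ℝ) ≤ 2 ^ e * (A : ℝ) / 2 ^ (n - 1) := by
    have : (0:ℝ) < (A:ℝ) := by exact_mod_cast hApos
    positivity
  have hs2 : s ^ 2 = 2 ^ e * (A : ℝ) / 2 ^ (n - 1) := Real.sq_sqrt harg
  -- no tie: 2t is never an odd integer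
  have notie : ∀ m : ℤ, Odd m → (m : ℝ) ≠ 2 * t := by
    intro m hm hmt
    have h4 : (4:ℝ) * 2^e * 2^(n-1) = 2^(n+1+e) := by
      rw [show (4:ℝ) = 2^2 by norm_num, ← pow_add, ← pow_add]
      congr 1
      omega
    have h1 : (m:ℝ)^2 = 2^(n+1+e) * (A:ℝ) := by
      have expand : ((m:ℝ))^2 = 4 * s^2 * 2^(n-1) * 2^(n-1) := by rw [hmt, ht]; ring
      rw [expand, hs2, ← h4]
      field_simp
    have h1' : m ^ 2 = 2 ^ (n + 1 + e) * A := by exact_mod_cast h1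
    have hdvd : (2:ℤ) ∣ m^2 := by
      rw [h1']; exact Dvd.dvd.mul_right (dvd_pow_self 2 (by omega)) A
    have heven : Even (m^2) := even_iff_two_dvd.mpr hdvd
    exact (Int.not_odd_iff_even.mpr heven) hm.pow
  -- reduce to nearest integer to t
  have key : ∀ B B' : ℤ,
      (|(B : ℝ) / 2 ^ (n - 1) - s| ≤ |(B' : ℝ) / 2 ^ (n - 1) - s|) ↔
      (|(B : ℝ) - t| ≤ |(B' : ℝ) - t|) := by
    intro B B'
    have e1 : ∀ C : ℤ, (C:ℝ)/2^(n-1) - s = ((C:ℝ) - t)/2^(n-1) := by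
      intro C; rw [ht]; field_simp
    rw [e1, e1, abs_div, abs_div, abs_of_pos hpow]
    exact div_le_div_iff_of_pos_right hpow
  have hround : ∀ B' : ℤ, B' ≠ round t → (1:ℝ) ≤ |(B':ℝ) - (round t : ℝ)| := by
    intro B' h
    have : (1:ℤ) ≤ |B' - round t| := Int.one_le_abs (sub_ne_zero.mpr h)
    calc (1:ℝ) ≤ ((|B' - round t| : ℤ) : ℝ) := by exact_mod_cast this
      _ = |(B':ℝ) - (round t : ℝ)| := by push_cast; ring
  have hrt : |(round t : ℝ) - t| ≤ 1/2 := by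
    rw [abs_sub_comm]; exact abs_sub_round t
  refine ⟨round t, ?_, ?_⟩
  · intro B'
    rw [key]
    by_cases h : B' = round t
    · subst h; exact le_refl _
    · have h1 := hround B' h
      have h2 : |(B':ℝ) - (round t:ℝ)| ≤ |(B':ℝ) - t| + |t - (round t:ℝ)| :=
        abs_sub_le _ _ _
      rw [abs_sub_comm t] at h2
      linarith
  · intro B hB
    by_contra h
    have hB' := (key B (round t)).mp (hB (round t))
    have h1 := hround B h
    have h2 : |(B:ℝ) - (round t:ℝ)| ≤ |(B:ℝ) - t| + |t - (round t:ℝ)| := abs_sub_le _ _ _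
    rw [abs_sub_comm t] at h2
    have hBt : |(B:ℝ) - t| = 1/2 := le_antisymm (le_trans hB' hrt) (by linarith)
    have hRt : |(round t:ℝ) - t| = 1/2 := le_antisymm hrt (by linarith [hB' , hBt])
    rcases abs_eq (by norm_num : (0:ℝ) ≤ 1/2) |>.mp hBt with hb | hb <;>
    rcases abs_eq (by norm_num : (0:ℝ) ≤ 1/2) |>.mp hRt with hr | hr
    · exact h (by exact_mod_cast (by linarith : (B:ℝ) = (round t:ℝ)))
    · have hz : B = round t + 1 := by
        exact_mod_cast (by linarith : (B:ℝ) = (round t:ℝ) + 1)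
      exact notie (B + round t) ⟨round t, by omega⟩ (by push_cast; linarith)
    · have hz : round t = B + 1 := by
        exact_mod_cast (by linarith : ((round t:ℤ):ℝ) = (B:ℝ) + 1)
      exact notie (B + round t) ⟨B, by omega⟩ (by push_cast; linarith)
    · exact h (by exact_mod_cast (by linarith : (B:ℝ) = (round t:ℝ)))
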